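/- Let d ≥ 2 and let y ∈ F_2[x_1,…,x_d] be a nonzero homogeneous polynomial of degree 1. Then there exists a homogeneous polynomial z of degree 1 such that y·z − x_1² ∈ J. -/

import Mathlib

open MvPolynomial

abbrev S4 : Type := ZMod 2 × ZMod 2

def Sα (s : S4) : ZMod 2 := s.1
def Sβ (s : S4) : ZMod 2 := s.2

def s0 : S4 := (0, 0)
def s1 : S4 := (1, 1)
def s2 : S4 := (1, 0)
def s3 : S4 := (0, 1)

/-- The linear form `α_j^A = Σ_i α(A_{ij}) x_i`. -/
noncomputable def alphaP {d : ℕ} {ι : Type*} (A : Matrix (Fin d) ι S4) (j : ι) :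
    MvPolynomial (Fin d) (ZMod 2) := ∑ i, C (Sα (A i j)) * X i

/-- The linear form `β_j^A = Σ_i β(A_{ij}) x_i`. -/
noncomputable def betaP {d : ℕ} {ι : Type*} (A : Matrix (Fin d) ι S4) (j : ι) :
    MvPolynomial (Fin d) (ZMod 2) := ∑ i, C (Sβ (A i j)) * X i

/-- `θ_j^A = α_j^A · β_j^A`. -/
noncomputable def thetaP {d : ℕ} {ι : Type*} (A : Matrix (Fin d) ι S4) (j : ι) :
    MvPolynomial (Fin d) (ZMod 2) := alphaP A j * betaP A j

/-- The characteristic ideal `I_A = ⟨θ_1^A, …, θ_n^A⟩`. -/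
noncomputable def charIdeal {d : ℕ} {ι : Type*} (A : Matrix (Fin d) ι S4) :
    Ideal (MvPolynomial (Fin d) (ZMod 2)) := Ideal.span (Set.range (thetaP A))

/-- The Stiefel–Whitney polynomial `w(A) = Π_j (1 + α_j^A + β_j^A)`. -/
noncomputable def swPoly {d : ℕ} {ι : Type*} [Fintype ι] (A : Matrix (Fin d) ι S4) :
    MvPolynomial (Fin d) (ZMod 2) := ∏ j, (1 + alphaP A j + betaP A j)

/-- The ideal `J = ⟨{x_i² + x_j² : i ≠ j} ∪ {x_i x_j : i ≠ j}⟩`. -/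
noncomputable def Jideal (d : ℕ) : Ideal (MvPolynomial (Fin d) (ZMod 2)) :=
  Ideal.span ({q | ∃ i j : Fin d, i ≠ j ∧ q = X i ^ 2 + X j ^ 2} ∪
              {q | ∃ i j : Fin d, i ≠ j ∧ q = X i * X j})

/-- `A₀ ∈ S^{d×(d-1)}`: the `l`-th column has entry `1` in rows `l` and `d`, `0` elsewhere. -/
def matA0 (d : ℕ) : Matrix (Fin d) (Fin (d - 1)) S4 :=
  fun i l => if i.val = l.val ∨ i.val = d - 1 then s1 else s0

/-- Index set for the columns of `A₁`: pairs `1 ≤ i < j ≤ d`. -/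
abbrev PairIdx (d : ℕ) : Type := {p : Fin d × Fin d // p.1 < p.2}

/-- `A₁ ∈ S^{d×(d(d-1)/2)}`: the column indexed by `i < j` has entry `2` in row `i`,
entry `3` in row `j` and `0` elsewhere. -/
def matA1 (d : ℕ) : Matrix (Fin d) (PairIdx d) S4 :=
  fun i p => if i = p.1.1 then s2 else if i = p.1.2 then s3 else s0

/-- `A = [A₀, A₁]`. -/
def matA (d : ℕ) : Matrix (Fin d) (Fin (d - 1) ⊕ PairIdx d) S4 :=
  Matrix.fromCols (matA0 d) (matA1 d)

/-- `B ∈ S^{d×1}`: all entries `2`. -/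
def matB (d : ℕ) : Matrix (Fin d) (Fin 1) S4 := fun _ _ => s2

/-- `C ∈ S^{d×1}`: entry `2` in row `1`, `0` elsewhere. -/
def matC (d : ℕ) : Matrix (Fin d) (Fin 1) S4 := fun i _ => if i.val = 0 then s2 else s0

/-- `E = [A,B,C,C]` (the case `d ≡ 0 mod 2`). -/
def matE0 (d : ℕ) := Matrix.fromCols (matA d)
  (Matrix.fromCols (matB d) (Matrix.fromCols (matC d) (matC d)))

/-- `E = [A,B,B]` (the case `d ≡ 1 mod 4`). -/
def matE1 (d : ℕ) := Matrix.fromCols (matA d) (Matrix.fromCols (matB d) (matB d))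

/-- `F = [E,C,C,C,C] = [A,C,C,C,C]` (the case `d ≡ 3 mod 4`; there `E = A`). -/
def matF3 (d : ℕ) := Matrix.fromCols (matA d)
  (Matrix.fromCols (matC d)
    (Matrix.fromCols (matC d) (Matrix.fromCols (matC d) (matC d))))


lemma deg1 {σ : Type*} [DecidableEq σ] (m : σ →₀ ℕ) (h : Finsupp.degree m = 1) :
    ∃ i, m = Finsupp.single i 1 := by
  obtain ⟨i, hi⟩ : m.support.Nonempty := by
    rw [Finsupp.support_nonempty_iff]
    rintro rfl; simp [map_zero] at h
  refine ⟨i, ?_⟩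
  have hsum : ∑ j ∈ m.support, m j = 1 := h
  have hmi : 1 ≤ m i := Nat.one_le_iff_ne_zero.mpr (Finsupp.mem_support_iff.mp hi)
  have hrest : ∑ j ∈ m.support.erase i, m j = 0 := by
    have := Finset.add_sum_erase _ m hi
    omega
  ext j
  rcases eq_or_ne j i with rfl | hj
  · have hle : m j ≤ 1 := hsum ▸ Finset.single_le_sum (fun k _ => Nat.zero_le _) hi
    simp [Finsupp.single_apply]; omega
  · have hj0 : m j = 0 := by
      by_contra h0
      have hjs : j ∈ m.support.erase i := Finset.mem_erase.mpr ⟨hj, Finsupp.mem_support_iff.mpr h0⟩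
      have := Finset.single_le_sum (f := m) (fun k _ => Nat.zero_le _) hjs
      omega
    rw [hj0, Finsupp.single_apply, if_neg (fun h => hj h.symm)]

lemma repr1 {d : ℕ} (p : MvPolynomial (Fin d) (ZMod 2)) (hp : p.IsHomogeneous 1) :
    p = ∑ i, C (coeff (Finsupp.single i 1) p) * X i := by
  ext m
  rw [coeff_sum]
  simp only [coeff_C_mul, coeff_X', mul_ite, mul_one, mul_zero]
  by_cases hm : m.degree = 1
  · obtain ⟨i, rfl⟩ := deg1 m hm
    rw [Finset.sum_eq_single i]
    · simp
    · intro b _ hb; rw [if_neg]; intro h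
      exact hb (by simpa using (Finsupp.single_left_injective one_ne_zero h.symm).symm)
    · simp
  · rw [hp.coeff_eq_zero hm, Finset.sum_eq_zero]
    intro i _
    rw [if_neg]
    rintro rfl
    exact hm (by simp [Finsupp.degree_apply, Finsupp.support_single_ne_zero _ one_ne_zero])

/-- for every nonzero homogeneous linear `y` there is a homogeneous
linear `z` with `y·z - x₁² ∈ J`. -/
theorem linear_complement (d : ℕ) (hd : 2 ≤ d) (y : MvPolynomial (Fin d) (ZMod 2))
    (hy1 : y.IsHomogeneous 1) (hy0 : y ≠ 0) :
    ∃ z : MvPolynomial (Fin d) (ZMod 2), z.IsHomogeneous 1 ∧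
      y * z - X (⟨0, by omega⟩ : Fin d) ^ 2 ∈ Jideal d := by
  have hrepr := repr1 y hy1
  have hJmul : ∀ i j : Fin d, i ≠ j → X i * X j ∈ Jideal d := fun i j h =>
    Ideal.subset_span (Or.inr ⟨i, j, h, rfl⟩)
  have hJsq : ∀ i j : Fin d, X i ^ 2 - X j ^ 2 ∈ Jideal d := by
    intro i j
    rcases eq_or_ne i j with rfl | h
    · simp [Ideal.zero_mem]
    · rw [CharTwo.sub_eq_add]
      exact Ideal.subset_span (Or.inl ⟨i, j, h, rfl⟩)
  obtain ⟨i0, hi0⟩ : ∃ i, coeff (Finsupp.single i 1) y ≠ 0 := by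
    by_contra h
    push_neg at h
    exact hy0 (by rw [hrepr]; simp [h])
  have hc1 : coeff (Finsupp.single i0 1) y = 1 := by
    have : ∀ a : ZMod 2, a ≠ 0 → a = 1 := by decide
    exact this _ hi0
  refine ⟨X i0, isHomogeneous_X _ _, ?_⟩
  have key : y * X i0 - X (⟨0, by omega⟩ : Fin d) ^ 2 =
      (∑ i ∈ Finset.univ.erase i0, C (coeff (Finsupp.single i 1) y) * (X i * X i0)) +
      (X i0 ^ 2 - X (⟨0, by omega⟩ : Fin d) ^ 2) := by
    conv_lhs => rw [hrepr]
    rw [Finset.sum_mul, ← Finset.add_sum_erase _ _ (Finset.mem_univ i0), hc1, map_one, one_mul]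
    simp only [mul_assoc]
    ring
  rw [key]
  exact Ideal.add_mem _
    (Ideal.sum_mem _ fun i hi =>
      Ideal.mul_mem_left _ _ (hJmul i i0 (Finset.mem_erase.mp hi).1))
    (hJsq i0 _)
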